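/- For the generalized von Koch function F^λ with λ ∈ (1/6, 5/6), the de Rham-type functional equations hold: F^λ(1−x) = F^λ(x) and F^λ(x/3) = F^λ(x)/3 for all x ∈ [0,1], where F^λ is defined as the increasing pointwise limit of the piecewise affine approximations F_n^λ obtained by iterating the operation Ω^λ starting from the zero function. -/
import Mathlib


/-- The normalized tent profile of the bump added by the operation `Ω^λ`:
zero on `[0,1/3]` and `[2/3,1]`, affine with slopes `±6` in between, peak `1` at `1/2`. -/
noncomputable def kochTent (t : ℝ) : ℝ :=
  max 0 (min (6 * (t - 1/3)) (6 * (2/3 - t)))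

/-- Data `(c, ℓ, m)` of an interval of affinity of the approximations:
left endpoint, length, slope.  `kochChild` describes the four subintervals
(with their slopes) produced by the operation `Ω^λ` on an interval with data `(c, ℓ, m)`. -/
noncomputable def kochChild (lam : ℝ) (i : Fin 4) (p : ℝ × ℝ × ℝ) : ℝ × ℝ × ℝ :=
  let c := p.1; let l := p.2.1; let m := p.2.2
  if i = 0 then (c, l / 3, m)
  else if i = 1 then (c + l / 3, l / 6, m + 6 * lam * Real.sqrt (1 + m ^ 2))
  else if i = 2 then (c + l / 2, l / 6, m - 6 * lam * Real.sqrt (1 + m ^ 2))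
  else (c + 2 * l / 3, l / 3, m)

/-- The interval of affinity (and slope) indexed by a word on the alphabet `{0,1,2,3}`,
starting from `[0,1]` with slope `0`. -/
noncomputable def kochCell (lam : ℝ) : List (Fin 4) → ℝ × ℝ × ℝ
  | [] => (0, 1, 0)
  | i :: w => kochChild lam i (kochCell lam w)

/-- The vertical bump of height `λ·ℓ·√(1+m²)` erected over the middle part of the
interval with data `(c, ℓ, m)`: this is `F_{n+1}^λ - F_n^λ` on this interval. -/
noncomputable def kochBump (lam : ℝ) (p : ℝ × ℝ × ℝ) (x : ℝ) : ℝ :=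
  lam * p.2.1 * Real.sqrt (1 + p.2.2 ^ 2) * kochTent ((x - p.1) / p.2.1)

/-- The `n`-th piecewise affine approximation `F_n^λ` of the generalized von Koch function,
obtained from `F_0^λ ≡ 0` by iterating the operation `Ω^λ`. -/
noncomputable def kochApprox (lam : ℝ) (n : ℕ) (x : ℝ) : ℝ :=
  ∑ k ∈ Finset.range n, ∑ w : Fin k → Fin 4, kochBump lam (kochCell lam (List.ofFn w)) x

-- tent lemmas
lemma kochTent_symm (t : ℝ) : kochTent (1 - t) = kochTent t := by
  unfold kochTent
  rw [min_comm]
  congr 2 <;> ring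

lemma kochTent_of_nonpos {t : ℝ} (h : t ≤ 1/3) : kochTent t = 0 := by
  unfold kochTent
  rw [max_eq_left]
  exact le_trans (min_le_left _ _) (by linarith)

-- cell = foldr
lemma kochCell_eq_foldr (lam : ℝ) (w : List (Fin 4)) :
    kochCell lam w = List.foldr (kochChild lam) (0, 1, 0) w := by
  induction w with
  | nil => rfl
  | cons i w ih => simp [kochCell, ih]

-- reflection map
def kochRefl : Fin 4 → Fin 4 := ![3, 2, 1, 0]

lemma kochRefl_bij : Function.Bijective kochRefl := by
  decide

lemma neg_sqrt (m : ℝ) : Real.sqrt (1 + (-m) ^ 2) = Real.sqrt (1 + m ^ 2) := by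
  rw [neg_pow]; ring_nf

lemma kochCell_refl (lam : ℝ) (w : List (Fin 4)) :
    kochCell lam (w.map kochRefl) =
      (1 - (kochCell lam w).1 - (kochCell lam w).2.1, (kochCell lam w).2.1,
        -(kochCell lam w).2.2) := by
  induction w with
  | nil => norm_num [kochCell]
  | cons i w ih =>
    simp only [List.map_cons, kochCell, ih]
    fin_cases i <;>
      simp [kochChild, kochRefl, neg_sq, Prod.ext_iff] <;>
      norm_num <;> ring_nf <;> simp [neg_sq]

-- bounds: starting from p with positive length, cells stay to the right of p.1 with positive length
lemma kochFoldr_bounds (lam : ℝ) (w : List (Fin 4)) (p : ℝ × ℝ × ℝ) (hl : 0 < p.2.1) :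
    p.1 ≤ (List.foldr (kochChild lam) p w).1 ∧ 0 < (List.foldr (kochChild lam) p w).2.1 := by
  induction w with
  | nil => exact ⟨le_refl _, hl⟩
  | cons i w ih =>
    obtain ⟨h1, h2⟩ := ih
    simp only [List.foldr_cons]
    set q := List.foldr (kochChild lam) p w with hq
    fin_cases i <;> simp [kochChild] <;> constructor <;> linarith

-- scaling
lemma kochFoldr_scale (lam : ℝ) (w : List (Fin 4)) (c l m : ℝ) :
    List.foldr (kochChild lam) (c / 3, l / 3, m) w =
      ((List.foldr (kochChild lam) (c, l, m) w).1 / 3,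
       (List.foldr (kochChild lam) (c, l, m) w).2.1 / 3,
       (List.foldr (kochChild lam) (c, l, m) w).2.2) := by
  induction w with
  | nil => rfl
  | cons i w ih =>
    simp only [List.foldr_cons, ih]
    fin_cases i <;> simp [kochChild, Prod.ext_iff] <;> norm_num <;> ring_nf <;> simp

-- bump lemmas
lemma kochBump_refl (lam : ℝ) (p : ℝ × ℝ × ℝ) (hl : 0 < p.2.1) (x : ℝ) :
    kochBump lam (1 - p.1 - p.2.1, p.2.1, -p.2.2) x = kochBump lam p (1 - x) := by
  unfold kochBump
  simp only [neg_sq]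
  congr 1
  rw [← kochTent_symm ((x - (1 - p.1 - p.2.1)) / p.2.1)]
  congr 1
  field_simp
  ring

lemma kochBump_scale (lam : ℝ) (p : ℝ × ℝ × ℝ) (hl : 0 < p.2.1) (x : ℝ) :
    kochBump lam (p.1 / 3, p.2.1 / 3, p.2.2) (x / 3) = kochBump lam p x / 3 := by
  unfold kochBump
  simp only
  have h3 : (x / 3 - p.1 / 3) / (p.2.1 / 3) = (x - p.1) / p.2.1 := by
    have hne : p.2.1 ≠ 0 := hl.ne'
    field_simp
  rw [h3]
  ring

lemma kochBump_zero (lam : ℝ) (p : ℝ × ℝ × ℝ) (hl : 0 < p.2.1) {x : ℝ} (hx : x ≤ p.1) :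
    kochBump lam p x = 0 := by
  unfold kochBump
  rw [kochTent_of_nonpos, mul_zero]
  have : (x - p.1) / p.2.1 ≤ 0 := div_nonpos_of_nonpos_of_nonneg (by linarith) hl.le
  linarith

lemma kochRefl_invol : Function.Involutive kochRefl := by
  intro x; fin_cases x <;> rfl

lemma kochApprox_refl (lam : ℝ) (n : ℕ) (x : ℝ) :
    kochApprox lam n (1 - x) = kochApprox lam n x := by
  unfold kochApprox
  refine Finset.sum_congr rfl fun k _ => ?_
  have hinv : Function.Involutive (fun w : Fin k → Fin 4 => kochRefl ∘ w) :=
    fun w => funext fun j => kochRefl_invol (w j)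
  refine Fintype.sum_bijective _ hinv.bijective _ _ fun w => ?_
  rw [← List.map_ofFn]
  rw [kochCell_refl]
  have hl : 0 < (kochCell lam (List.ofFn w)).2.1 := by
    rw [kochCell_eq_foldr]
    exact (kochFoldr_bounds lam _ (0, 1, 0) one_pos).2
  exact (kochBump_refl lam _ hl x).symm

lemma kochLevel_scale (lam : ℝ) (k : ℕ) {x : ℝ} (hx0 : 0 ≤ x) (hx1 : x ≤ 1) :
    ∑ w : Fin (k + 1) → Fin 4, kochBump lam (kochCell lam (List.ofFn w)) (x / 3) =
      (∑ v : Fin k → Fin 4, kochBump lam (kochCell lam (List.ofFn v)) x) / 3 := by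
  rw [← (Fin.snocEquiv (fun _ => Fin 4)).sum_comp
    (fun w => kochBump lam (kochCell lam (List.ofFn w)) (x / 3))]
  have hofn : ∀ (i : Fin 4) (v : Fin k → Fin 4),
      List.ofFn (Fin.snoc v i : Fin (k+1) → Fin 4) = List.ofFn v ++ [i] := by
    intro i v
    rw [List.ofFn_succ']
    simp [Fin.snoc_castSucc, Fin.snoc_last, List.concat_eq_append]
  rw [Fintype.sum_prod_type]
  have hcell : ∀ (i : Fin 4) (v : Fin k → Fin 4),
      kochCell lam (List.ofFn v ++ [i]) =
        List.foldr (kochChild lam) (kochChild lam i (0,1,0)) (List.ofFn v) := by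
    intro i v
    rw [kochCell_eq_foldr, List.foldr_append]
    rfl
  rw [Fin.sum_univ_four]
  have hzero : ∀ (i : Fin 4), i ≠ 0 →
      ∀ v : Fin k → Fin 4,
        kochBump lam (kochCell lam (List.ofFn (Fin.snocEquiv (fun _ => Fin 4) (i, v)))) (x / 3)
          = 0 := by
    intro i hi v
    have he : (Fin.snocEquiv (fun _ => Fin 4) (i, v) : Fin (k+1) → Fin 4) = Fin.snoc v i := rfl
    rw [he, hofn, hcell]
    set p := kochChild lam i (0,1,0) with hp
    have hpl : 0 < p.2.1 ∧ 1/3 ≤ p.1 := by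
      fin_cases i <;> simp_all [kochChild] <;> norm_num
    obtain ⟨h1, h2⟩ := kochFoldr_bounds lam (List.ofFn v) p hpl.1
    exact kochBump_zero lam _ h2 (by linarith [hpl.2])
  rw [Finset.sum_eq_zero (fun v _ => hzero 1 (by decide) v),
      Finset.sum_eq_zero (fun v _ => hzero 2 (by decide) v),
      Finset.sum_eq_zero (fun v _ => hzero 3 (by decide) v)]
  have hmain : ∀ v : Fin k → Fin 4,
      kochBump lam (kochCell lam (List.ofFn (Fin.snocEquiv (fun _ => Fin 4) (0, v)))) (x / 3)
        = kochBump lam (kochCell lam (List.ofFn v)) x / 3 := by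
    intro v
    have he : (Fin.snocEquiv (fun _ => Fin 4) (0, v) : Fin (k+1) → Fin 4) = Fin.snoc v 0 := rfl
    rw [he, hofn, hcell]
    have h0 : kochChild lam 0 (0,1,0) = ((0:ℝ)/3, (1:ℝ)/3, (0:ℝ)) := by
      simp [kochChild]
    rw [h0, kochFoldr_scale]
    have hl : 0 < (List.foldr (kochChild lam) ((0:ℝ),(1:ℝ),(0:ℝ)) (List.ofFn v)).2.1 :=
      (kochFoldr_bounds lam _ (0, 1, 0) one_pos).2
    rw [kochCell_eq_foldr]
    exact kochBump_scale lam _ hl x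
  rw [Finset.sum_congr rfl (fun v _ => hmain v), ← Finset.sum_div]
  ring

lemma kochApprox_scale (lam : ℝ) (n : ℕ) {x : ℝ} (hx0 : 0 ≤ x) (hx1 : x ≤ 1) :
    kochApprox lam (n + 1) (x / 3) = kochApprox lam n x / 3 := by
  unfold kochApprox
  rw [Finset.sum_range_succ']
  have h0 : ∑ w : Fin 0 → Fin 4, kochBump lam (kochCell lam (List.ofFn w)) (x / 3) = 0 := by
    rw [Fintype.sum_subsingleton _ (fun i : Fin 0 => Fin.elim0 i)]
    have : List.ofFn (fun i : Fin 0 => Fin.elim0 i) = ([] : List (Fin 4)) := by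
      simp
    rw [this]
    show kochBump lam (0, 1, 0) (x / 3) = 0
    unfold kochBump
    rw [kochTent_of_nonpos (by simpa using by linarith : (x / 3 - 0) / 1 ≤ 1/3), mul_zero]
  rw [h0, add_zero, Finset.sum_div]
  exact Finset.sum_congr rfl fun k _ => kochLevel_scale lam k hx0 hx1

theorem koch_deRham_equations (lam : ℝ) (hlam : lam ∈ Set.Ioo (1/6 : ℝ) (5/6))
    (F : ℝ → ℝ)
    (hF : ∀ x ∈ Set.Icc (0 : ℝ) 1,
      Filter.Tendsto (fun n => kochApprox lam n x) Filter.atTop (nhds (F x))) :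
    ∀ x ∈ Set.Icc (0 : ℝ) 1, F (1 - x) = F x ∧ F (x / 3) = F x / 3 := by
  intro x hx
  obtain ⟨hx0, hx1⟩ := hx
  constructor
  · have h1 : Filter.Tendsto (fun n => kochApprox lam n (1 - x)) Filter.atTop (nhds (F (1 - x))) :=
      hF (1 - x) ⟨by linarith, by linarith⟩
    have h1' : Filter.Tendsto (fun n => kochApprox lam n x) Filter.atTop (nhds (F (1 - x))) := by
      simpa only [kochApprox_refl] using h1
    exact tendsto_nhds_unique h1' (hF x ⟨hx0, hx1⟩)
  · have h2 : Filter.Tendsto (fun n => kochApprox lam n (x / 3)) Filter.atTop (nhds (F (x / 3))) :=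
      hF (x / 3) ⟨by linarith, by linarith⟩
    have h3 : Filter.Tendsto (fun n => kochApprox lam (n + 1) (x / 3)) Filter.atTop
        (nhds (F (x / 3))) := h2.comp (Filter.tendsto_add_atTop_nat 1)
    have h4 : Filter.Tendsto (fun n => kochApprox lam n x / 3) Filter.atTop
        (nhds (F (x / 3))) := by
      refine h3.congr fun n => ?_
      exact kochApprox_scale lam n hx0 hx1
    have h5 : Filter.Tendsto (fun n => kochApprox lam n x / 3) Filter.atTop
        (nhds (F x / 3)) := (hF x ⟨hx0, hx1⟩).div_const 3
    exact tendsto_nhds_unique h4 h5
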